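/- If M ⊂ PSym(n) (positive-definite symmetric matrices) is an isotropic set and Φ: M → Sym(n) is isotropic, then there exist scalar-valued functions β_{−1}, β₀, …, β_{n−2} depending on the matrix invariants of X such that Φ(X) = β_{−1} X^{−1} + β₀ I + β₁ X + ⋯ + β_{n−2} X^{n−2} for all X ∈ M. -/

import Mathlib

open Matrix

/-- A matrix is orthogonal. -/
def IsOrthogonal {n : ℕ} (Q : Matrix (Fin n) (Fin n) ℝ) : Prop :=
  Q * Qᵀ = 1 ∧ Qᵀ * Q = 1

namespace Iso13

abbrev Mat (n : ℕ) := Matrix (Fin n) (Fin n) ℝ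

lemma conj_pow {n : ℕ} (X Q : Mat n) (hQ : IsOrthogonal Q) (k : ℕ) :
    (Qᵀ * X * Q) ^ k = Qᵀ * X ^ k * Q := by
  induction k with
  | zero => simp [hQ.2]
  | succ k ih =>
      rw [pow_succ, ih, pow_succ]
      calc Qᵀ * X ^ k * Q * (Qᵀ * X * Q) = Qᵀ * X ^ k * (Q * Qᵀ) * X * Q := by
            noncomm_ring
        _ = Qᵀ * (X ^ k * X) * Q := by rw [hQ.1]; noncomm_ring

lemma conj_inv {n : ℕ} (X Q : Mat n) (hQ : IsOrthogonal Q) :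
    (Qᵀ * X * Q)⁻¹ = Qᵀ * X⁻¹ * Q := by
  have h1 : Q⁻¹ = Qᵀ := Matrix.inv_eq_left_inv hQ.2
  have h2 : (Qᵀ)⁻¹ = Q := Matrix.inv_eq_left_inv hQ.1
  rw [Matrix.mul_inv_rev, Matrix.mul_inv_rev, h1, h2, mul_assoc]

/-- The family X⁻¹, X^0, X^1, ..., X^(n-2). -/
noncomputable def bas {n : ℕ} (X : Mat n) (i : Fin n) : Mat n :=
  if (i : ℕ) = 0 then X⁻¹ else X ^ ((i : ℕ) - 1)

lemma bas_conj {n : ℕ} (X Q : Mat n) (hQ : IsOrthogonal Q) (i : Fin n) :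
    bas (Qᵀ * X * Q) i = Qᵀ * bas X i * Q := by
  unfold bas
  split
  · exact conj_inv X Q hQ
  · exact conj_pow X Q hQ _

lemma bas_isSymm {n : ℕ} {X : Mat n} (hX : X.IsSymm) (i : Fin n) :
    (bas X i).IsSymm := by
  unfold bas
  split
  · rw [Matrix.IsSymm, Matrix.transpose_nonsing_inv, hX]
  · rw [Matrix.IsSymm, Matrix.transpose_pow, hX]

noncomputable def gram {n : ℕ} (X : Mat n) : Mat n :=
  fun i j => (bas X i * bas X j).trace

noncomputable def bv {n : ℕ} (Φ : Mat n → Mat n) (X : Mat n) (i : Fin n) : ℝ :=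
  (bas X i * Φ X).trace

noncomputable def sol {n : ℕ} (Φ : Mat n → Mat n) (X : Mat n) : Fin n → ℝ :=
  open scoped Classical in
  if h : ∃ v, (gram X).mulVec v = bv Φ X then h.choose else 0

noncomputable def beta {n : ℕ} (Φ : Mat n → Mat n) (k : ℤ) (X : Mat n) : ℝ :=
  if h : (k + 1).toNat < n ∧ -1 ≤ k then sol Φ X ⟨(k + 1).toNat, h.1⟩ else 0

lemma trace_conj {n : ℕ} (A B Q : Mat n) (hQ : IsOrthogonal Q) :
    ((Qᵀ * A * Q) * (Qᵀ * B * Q)).trace = (A * B).trace := by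
  have : (Qᵀ * A * Q) * (Qᵀ * B * Q) = Qᵀ * (A * B) * Q := by
    calc (Qᵀ * A * Q) * (Qᵀ * B * Q) = Qᵀ * A * (Q * Qᵀ) * B * Q := by noncomm_ring
      _ = Qᵀ * (A * B) * Q := by rw [hQ.1]; noncomm_ring
  rw [this, Matrix.trace_mul_comm (Qᵀ * (A * B)) Q, ← mul_assoc, ← mul_assoc, hQ.1, one_mul]

lemma gram_conj {n : ℕ} (X Q : Mat n) (hQ : IsOrthogonal Q) :
    gram (Qᵀ * X * Q) = gram X := by
  ext i j
  simp only [gram, bas_conj _ _ hQ]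
  exact trace_conj _ _ _ hQ

lemma bv_conj {n : ℕ} (Φ : Mat n → Mat n) (X Q : Mat n) (hQ : IsOrthogonal Q)
    (hΦ : Φ (Qᵀ * X * Q) = Qᵀ * Φ X * Q) :
    bv Φ (Qᵀ * X * Q) = bv Φ X := by
  funext i
  simp only [bv, bas_conj _ _ hQ, hΦ]
  exact trace_conj _ _ _ hQ

lemma beta_conj {n : ℕ} (Φ : Mat n → Mat n) (k : ℤ) (X Q : Mat n) (hQ : IsOrthogonal Q)
    (hΦ : Φ (Qᵀ * X * Q) = Qᵀ * Φ X * Q) :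
    beta Φ k (Qᵀ * X * Q) = beta Φ k X := by
  have h1 : sol Φ (Qᵀ * X * Q) = sol Φ X := by
    unfold sol
    rw [gram_conj _ _ hQ, bv_conj _ _ _ hQ hΦ]
  unfold beta
  rw [h1]

/-- Gram/projection argument. -/
lemma gram_solution {n : ℕ} (X : Mat n) (hX : X.IsSymm) (A : Mat n)
    (a : Fin n → ℝ) (ha : A = ∑ i, a i • bas X i)
    (v : Fin n → ℝ) (hv : (gram X).mulVec v = bv (fun _ => A) X) :
    A = ∑ i, v i • bas X i := by
  set d : Mat n := (∑ i, v i • bas X i) - A with hd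
  have hdsum : d = ∑ i, (v i - a i) • bas X i := by
    rw [hd, ha, ← Finset.sum_sub_distrib]
    exact Finset.sum_congr rfl fun i _ => (sub_smul _ _ _).symm
  have htr : ∀ j, (bas X j * d).trace = 0 := by
    intro j
    have h1 := congrFun hv j
    simp only [Matrix.mulVec, dotProduct, gram, bv] at h1
    have h2 : (bas X j * d).trace
        = (∑ i, (bas X j * bas X i).trace * v i) - (bas X j * A).trace := by
      rw [hd, Matrix.mul_sub, Matrix.trace_sub, Matrix.mul_sum, Matrix.trace_sum]
      simp [Matrix.mul_smul, mul_comm]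
    rw [h2, h1, sub_self]
  have hdd : (dᵀ * d).trace = 0 := by
    have hsymd : dᵀ = d := by
      rw [hdsum, Matrix.transpose_sum]
      exact Finset.sum_congr rfl fun i _ => by
        rw [Matrix.transpose_smul, bas_isSymm hX i]
    rw [hsymd]
    have h3 : (d * d).trace = ∑ i, (v i - a i) * (bas X i * d).trace := by
      nth_rewrite 1 [hdsum]
      rw [Finset.sum_mul, Matrix.trace_sum]
      exact Finset.sum_congr rfl fun i _ => by rw [smul_mul_assoc, Matrix.trace_smul]; rfl
    rw [h3]
    simp [htr]
  have hd0 : d = 0 := by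
    have h4 : (dᵀ * d).trace = ∑ j, ∑ i, d i j ^ 2 := by
      simp [Matrix.trace, Matrix.diag, Matrix.mul_apply, Matrix.transpose_apply, sq]
    rw [h4] at hdd
    have h5 : ∀ j ∈ Finset.univ, ∀ i ∈ Finset.univ, (0:ℝ) ≤ d i j ^ 2 :=
      fun j _ i _ => sq_nonneg _
    ext i j
    have h6 := (Finset.sum_eq_zero_iff_of_nonneg
      (fun j _ => Finset.sum_nonneg (fun i _ => sq_nonneg (d i j)))).mp hdd j (Finset.mem_univ j)
    have h7 := (Finset.sum_eq_zero_iff_of_nonneg (fun i _ => sq_nonneg (d i j))).mp h6 i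
      (Finset.mem_univ i)
    simpa [pow_eq_zero_iff] using h7
  have := sub_eq_zero.mp hd0
  rw [← this]

/-- Any isotropic Φ on an isotropic set of symmetric matrices gives a polynomial in X. -/
lemma poly_rep {n : ℕ} (M : Set (Mat n))
    (hMpsym : ∀ X ∈ M, X.IsSymm ∧ X.PosDef)
    (hMiso : ∀ X ∈ M, ∀ Q : Mat n, IsOrthogonal Q → Qᵀ * X * Q ∈ M)
    (Φ : Mat n → Mat n)
    (hΦiso : ∀ X ∈ M, ∀ Q : Mat n, IsOrthogonal Q → Φ (Qᵀ * X * Q) = Qᵀ * Φ X * Q)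
    (X : Mat n) (hX : X ∈ M) :
    ∃ c : ℕ → ℝ, Φ X = ∑ k ∈ Finset.range n, c k • X ^ k := by
  classical
  rcases Nat.eq_zero_or_pos n with hn | hn
  · subst hn; exact ⟨0, Subsingleton.elim _ _⟩
  obtain ⟨hsym, hpd⟩ := hMpsym X hX
  have hH : X.IsHermitian := hpd.1
  set Q : Mat n := (hH.eigenvectorUnitary : Mat n) with hQdef
  have hstar : star Q = Qᵀ := by
    rw [Matrix.star_eq_conjTranspose, Matrix.conjTranspose_eq_transpose_of_trivial]
  have hQorth : IsOrthogonal Q := by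
    constructor
    · rw [← hstar]; exact Matrix.mem_unitaryGroup_iff.mp hH.eigenvectorUnitary.2
    · rw [← hstar]; exact Matrix.mem_unitaryGroup_iff'.mp hH.eigenvectorUnitary.2
  set d : Fin n → ℝ := hH.eigenvalues with hddef
  have hdiag : Qᵀ * X * Q = Matrix.diagonal d := by
    have h : star Q * X * Q = Matrix.diagonal (RCLike.ofReal ∘ d : Fin n → ℝ) := by
      have h' := hH.conjStarAlgAut_star_eigenvectorUnitary
      rw [Unitary.conjStarAlgAut_apply, Unitary.coe_star, star_star] at h'
      exact h'
    rw [hstar] at h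
    rw [h]
    have hco : (RCLike.ofReal ∘ d : Fin n → ℝ) = d := by
      rw [RCLike.ofReal_real_eq_id, Function.id_comp]
    rw [hco]
  have hDmem : Matrix.diagonal d ∈ M := hdiag ▸ hMiso X hX Q hQorth
  set F : Mat n := Φ (Matrix.diagonal d) with hFdef
  have hFX : F = Qᵀ * Φ X * Q := by
    rw [hFdef, ← hdiag]; exact hΦiso X hX Q hQorth
  -- off-diagonal entries of F vanish
  have hoff : ∀ i j, i ≠ j → F i j = 0 := by
    intro i j hij
    set s : Fin n → ℝ := fun t => if t = i then (-1 : ℝ) else 1 with hs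
    have hss : ∀ t, s t * s t = 1 := by
      intro t; by_cases h : t = i <;> simp [hs, h]
    have hdiagss : Matrix.diagonal s * Matrix.diagonal s = 1 := by
      rw [Matrix.diagonal_mul_diagonal]
      have : (fun t => s t * s t) = fun _ => (1:ℝ) := funext hss
      rw [this, Matrix.diagonal_one]
    have hSorth : IsOrthogonal (Matrix.diagonal s) := by
      constructor <;> rw [Matrix.diagonal_transpose] <;> exact hdiagss
    have hfix : (Matrix.diagonal s)ᵀ * Matrix.diagonal d * Matrix.diagonal s
        = Matrix.diagonal d := by
      rw [Matrix.diagonal_transpose, Matrix.diagonal_mul_diagonal,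
        Matrix.diagonal_mul_diagonal]
      exact congrArg Matrix.diagonal (funext fun t => by
        calc s t * d t * s t = s t * s t * d t := by ring
          _ = d t := by rw [hss t, one_mul])
    have hcomm := hΦiso (Matrix.diagonal d) hDmem (Matrix.diagonal s) hSorth
    rw [hfix, ← hFdef, Matrix.diagonal_transpose] at hcomm
    have h3 : F i j = s i * F i j * s j := by
      nth_rewrite 1 [hcomm]
      rw [Matrix.mul_diagonal, Matrix.diagonal_mul]
    have hsi : s i = -1 := if_pos rfl
    have hsj : s j = 1 := if_neg (fun (h : j = i) => hij h.symm)
    rw [hsi, hsj] at h3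
    linarith [h3]
  -- equal eigenvalues give equal diagonal entries
  have hdiagval : ∀ i j, d i = d j → F i i = F j j := by
    intro i j hdij
    set σ : Equiv.Perm (Fin n) := Equiv.swap i j with hσ
    set P : Mat n := σ.toPEquiv.toMatrix with hP
    have hPT : Pᵀ = P := by
      rw [hP, ← PEquiv.toMatrix_symm, ← Equiv.toPEquiv_symm, hσ, Equiv.symm_swap]
    have hPP : P * P = 1 := by
      rw [hP, ← PEquiv.toMatrix_trans, ← Equiv.toPEquiv_trans, hσ, Equiv.swap_swap,
        Equiv.toPEquiv_refl, PEquiv.toMatrix_refl]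
    have hPorth : IsOrthogonal P := ⟨by rw [hPT]; exact hPP, by rw [hPT]; exact hPP⟩
    have hconj : ∀ A : Mat n, Pᵀ * A * P = A.submatrix σ σ := by
      intro A
      rw [hPT, hP, PEquiv.toMatrix_toPEquiv_mul, PEquiv.mul_toMatrix_toPEquiv,
        Matrix.submatrix_submatrix]
      simp [hσ, Equiv.symm_swap, Function.comp]
    have hds : ∀ a, d (σ a) = d a := by
      intro a
      by_cases h1 : a = i
      · subst h1; rw [hσ, Equiv.swap_apply_left, hdij]
      by_cases h2 : a = j
      · subst h2; rw [hσ, Equiv.swap_apply_right, hdij]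
      · rw [hσ, Equiv.swap_apply_of_ne_of_ne h1 h2]
    have hfix : Pᵀ * Matrix.diagonal d * P = Matrix.diagonal d := by
      rw [hconj]
      ext a b
      by_cases hab : a = b
      · subst hab
        simp [Matrix.submatrix_apply, Matrix.diagonal_apply_eq, hds]
      · have : σ a ≠ σ b := fun h => hab (σ.injective h)
        simp [Matrix.submatrix_apply, Matrix.diagonal_apply_ne _ this,
          Matrix.diagonal_apply_ne _ hab]
    have hcomm := hΦiso (Matrix.diagonal d) hDmem P hPorth
    rw [hfix, ← hFdef, hconj] at hcomm
    have h2 := congrFun (congrFun hcomm i) i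
    simpa [Matrix.submatrix_apply, hσ, Equiv.swap_apply_left] using h2
  -- Lagrange interpolation
  set sfin : Finset ℝ := Finset.univ.image d with hsfin
  set r : ℝ → ℝ := fun t => if h : ∃ i, d i = t then F h.choose h.choose else 0 with hr
  set p : Polynomial ℝ := Lagrange.interpolate sfin id r with hp
  have hinj : Set.InjOn id (sfin : Set ℝ) := Function.injective_id.injOn
  have hdeg : p.natDegree < n := by
    have h1 := Lagrange.degree_interpolate_lt (s := sfin) (v := id) r hinj
    have h2 : sfin.card ≤ n := by
      simpa using Finset.card_image_le (s := (Finset.univ : Finset (Fin n))) (f := d)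
    rcases eq_or_ne p 0 with h | h
    · simpa [h] using hn
    · rw [Polynomial.natDegree_lt_iff_degree_lt h]
      calc p.degree < (sfin.card : ℕ) := h1
        _ ≤ (n : ℕ) := by exact_mod_cast Nat.cast_le.mpr h2
  have heval : ∀ i, p.eval (d i) = F i i := by
    intro i
    have hmem : d i ∈ sfin := Finset.mem_image_of_mem d (Finset.mem_univ i)
    have h1 := Lagrange.eval_interpolate_at_node r hinj hmem
    simp only [id] at h1
    rw [hp, h1]
    have hex : ∃ j, d j = d i := ⟨i, rfl⟩
    show (if h : ∃ j, d j = d i then F h.choose h.choose else 0) = F i i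
    rw [dif_pos hex]
    exact hdiagval _ _ hex.choose_spec
  have hFsum : F = ∑ k ∈ Finset.range n, p.coeff k • (Matrix.diagonal d) ^ k := by
    ext a b
    rw [Matrix.sum_apply]
    by_cases hab : a = b
    · subst hab
      simp only [Matrix.diagonal_pow, Matrix.smul_apply, Matrix.diagonal_apply_eq,
        Pi.pow_apply, smul_eq_mul]
      rw [← heval a, Polynomial.eval_eq_sum_range' hdeg]
    · rw [hoff a b hab]
      symm
      refine Finset.sum_eq_zero fun k _ => ?_
      simp [Matrix.diagonal_pow, Matrix.diagonal_apply_ne _ hab]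
  -- transfer back to X
  refine ⟨fun k => p.coeff k, ?_⟩
  have hQQ : Q * Qᵀ = 1 := hQorth.1
  have hback : ∀ k : ℕ, Q * (Matrix.diagonal d) ^ k * Qᵀ = X ^ k := by
    intro k
    rw [← hdiag, conj_pow X Q hQorth k]
    calc Q * (Qᵀ * X ^ k * Q) * Qᵀ = (Q * Qᵀ) * X ^ k * (Q * Qᵀ) := by noncomm_ring
      _ = X ^ k := by rw [hQQ, one_mul, mul_one]
  have hPhiX : Φ X = Q * F * Qᵀ := by
    rw [hFX]
    calc Φ X = (Q * Qᵀ) * Φ X * (Q * Qᵀ) := by rw [hQQ, one_mul, mul_one]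
      _ = Q * (Qᵀ * Φ X * Q) * Qᵀ := by noncomm_ring
  rw [hPhiX, hFsum, Matrix.mul_sum, Matrix.sum_mul]
  exact Finset.sum_congr rfl fun k _ => by
    rw [mul_smul_comm, smul_mul_assoc, hback k]

/-- Via Cayley-Hamilton, membership in the span of `bas X`. -/
lemma span_rep {n : ℕ} (X : Mat n) (hpd : X.PosDef) (c : ℕ → ℝ)
    (A : Mat n) (hA : A = ∑ k ∈ Finset.range n, c k • X ^ k) :
    ∃ a : Fin n → ℝ, A = ∑ i, a i • bas X i := by
  classical
  rcases Nat.eq_zero_or_pos n with hn | hn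
  · subst hn; exact ⟨0, Subsingleton.elim _ _⟩
  set S := Submodule.span ℝ (Set.range (bas X)) with hS
  have hdet : IsUnit X.det := isUnit_iff_ne_zero.mpr (ne_of_gt hpd.det_pos)
  have hXinv : X⁻¹ * X = 1 := Matrix.nonsing_inv_mul X hdet
  have hmem1 : ∀ k, k + 1 < n → X ^ k ∈ S := by
    intro k hk
    have h : X ^ k = bas X ⟨k + 1, hk⟩ := by simp [bas]
    rw [h]
    exact Submodule.subset_span ⟨_, rfl⟩
  have hinv_mem : X⁻¹ ∈ S := by
    have h : X⁻¹ = bas X ⟨0, hn⟩ := by simp [bas]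
    rw [h]
    exact Submodule.subset_span ⟨_, rfl⟩
  have hmulinv : ∀ j : ℕ, 0 < j → X⁻¹ * X ^ j = X ^ (j - 1) := by
    intro j hj
    have h : X ^ j = X * X ^ (j - 1) := by
      rw [← pow_succ']
      congr 1
      omega
    rw [h, ← mul_assoc, hXinv, one_mul]
  have hpow_mem : ∀ k, k < n → X ^ k ∈ S := by
    intro k hk
    by_cases hk1 : k + 1 < n
    · exact hmem1 k hk1
    have hk2 : k = n - 1 := by omega
    have hCH := Matrix.aeval_self_charpoly X
    have hmonic := X.charpoly_monic
    have hdeg : X.charpoly.natDegree = n := by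
      simp [X.charpoly_natDegree_eq_dim]
    have hsum : Polynomial.aeval X X.charpoly
        = ∑ j ∈ Finset.range (n + 1), X.charpoly.coeff j • X ^ j :=
      Polynomial.aeval_eq_sum_range' (n := n + 1) (by omega) X
    have h1 : (0 : Mat n)
        = (∑ j ∈ Finset.range n, X.charpoly.coeff j • X ^ j) + X.charpoly.coeff n • X ^ n := by
      rw [← Finset.sum_range_succ, ← hsum, hCH]
    have hcoeffn : X.charpoly.coeff n = 1 := by
      simpa [hdeg] using hmonic.coeff_natDegree
    rw [hcoeffn, one_smul] at h1
    have hXn : X ^ n = -∑ j ∈ Finset.range n, X.charpoly.coeff j • X ^ j :=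
      eq_neg_of_add_eq_zero_right h1.symm
    have key : X ^ (n - 1) = -∑ j ∈ Finset.range n, X.charpoly.coeff j • (X⁻¹ * X ^ j) := by
      have h2 : X⁻¹ * X ^ n = X ^ (n - 1) := hmulinv n hn
      rw [← h2, hXn, Matrix.mul_neg, Matrix.mul_sum]
      congr 1
      exact Finset.sum_congr rfl fun j _ => mul_smul_comm _ _ _
    rw [hk2, key]
    refine Submodule.neg_mem _ (Submodule.sum_mem _ fun j hj => Submodule.smul_mem _ _ ?_)
    rcases Nat.eq_zero_or_pos j with h0 | h0
    · subst h0; simp only [pow_zero, mul_one]; exact hinv_mem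

    · rw [hmulinv j h0]
      exact hmem1 _ (by have := Finset.mem_range.mp hj; omega)
  have hAS : A ∈ S := by
    rw [hA]
    exact Submodule.sum_mem _ fun k hk =>
      Submodule.smul_mem _ _ (hpow_mem k (Finset.mem_range.mp hk))
  obtain ⟨a, haa⟩ := (Submodule.mem_span_range_iff_exists_fun ℝ).mp hAS
  exact ⟨a, haa.symm⟩

end Iso13

theorem isotropic_on_posdef_representation {n : ℕ}
    (M : Set (Matrix (Fin n) (Fin n) ℝ))
    (hMpsym : ∀ X ∈ M, X.IsSymm ∧ X.PosDef)
    (hMiso : ∀ X ∈ M, ∀ Q : Matrix (Fin n) (Fin n) ℝ, IsOrthogonal Q →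
      Qᵀ * X * Q ∈ M)
    (Φ : Matrix (Fin n) (Fin n) ℝ → Matrix (Fin n) (Fin n) ℝ)
    (hΦsym : ∀ X ∈ M, (Φ X).IsSymm)
    (hΦiso : ∀ X ∈ M, ∀ Q : Matrix (Fin n) (Fin n) ℝ, IsOrthogonal Q →
      Φ (Qᵀ * X * Q) = Qᵀ * Φ X * Q) :
    ∃ β : ℤ → (Matrix (Fin n) (Fin n) ℝ → ℝ),
      (∀ k : ℤ, ∀ X ∈ M, ∀ Q : Matrix (Fin n) (Fin n) ℝ, IsOrthogonal Q →
        β k (Qᵀ * X * Q) = β k X) ∧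
      ∀ X ∈ M, Φ X = β (-1) X • X⁻¹ +
        ∑ k ∈ Finset.range (n - 1), β k X • X ^ k := by
  classical
  refine ⟨Iso13.beta Φ, ?_, ?_⟩
  · intro k X hX Q hQ
    exact Iso13.beta_conj Φ k X Q hQ (hΦiso X hX Q hQ)
  · intro X hX
    obtain ⟨c, hc⟩ := Iso13.poly_rep M hMpsym hMiso Φ hΦiso X hX
    obtain ⟨a, ha⟩ := Iso13.span_rep X (hMpsym X hX).2 c (Φ X) hc
    have hsolv : ∃ v, (Iso13.gram X).mulVec v = Iso13.bv Φ X := by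
      refine ⟨a, ?_⟩
      funext i
      simp only [Matrix.mulVec, dotProduct, Iso13.gram, Iso13.bv]
      rw [ha, Matrix.mul_sum, Matrix.trace_sum]
      exact Finset.sum_congr rfl fun j _ => by
        rw [mul_smul_comm, Matrix.trace_smul, smul_eq_mul, mul_comm]
    have hvs : (Iso13.gram X).mulVec (Iso13.sol Φ X) = Iso13.bv Φ X := by
      simp only [Iso13.sol, dif_pos hsolv]
      exact hsolv.choose_spec
    have hrep : Φ X = ∑ i, Iso13.sol Φ X i • Iso13.bas X i :=
      Iso13.gram_solution X (hMpsym X hX).1 (Φ X) a ha _ hvs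
    cases n with
    | zero => exact Subsingleton.elim _ _
    | succ m =>
      rw [hrep, Fin.sum_univ_succ]
      refine congrArg₂ (· + ·) ?_ ?_
      · have h0 : Iso13.bas X 0 = X⁻¹ := by simp [Iso13.bas]
        have hb : Iso13.beta Φ (-1) X = Iso13.sol Φ X 0 := by
          have hcond : ((-1 : ℤ) + 1).toNat < m + 1 ∧ (-1 : ℤ) ≤ -1 := by
            constructor
            · norm_num
            · exact le_refl _
          simp only [Iso13.beta, dif_pos hcond]
          congr 1
        rw [h0, hb]
      · have hm : m + 1 - 1 = m := rfl
        rw [hm, Finset.sum_range fun k => Iso13.beta Φ k X • X ^ k]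
        refine Finset.sum_congr rfl fun i _ => ?_
        have hcond : (((i : ℕ) : ℤ) + 1).toNat < m + 1 ∧ (-1 : ℤ) ≤ ((i : ℕ) : ℤ) := by
          constructor
          · have := i.isLt
            omega
          · omega
        have hb : Iso13.beta Φ ((i : ℕ) : ℤ) X = Iso13.sol Φ X i.succ := by
          simp only [Iso13.beta, dif_pos hcond]
          congr 1
        have hbas : Iso13.bas X i.succ = X ^ (i : ℕ) := by
          simp [Iso13.bas, Fin.val_succ]
        rw [hb, hbas]
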